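/- Let n > 3 be odd. The class L_n contains no alternative loop: there is no integer m with 1 < m < n, gcd(m, n) = 1 and gcd(m − 1, n) = 1 for which both m·y − (m−1)·(m·y − (m−1)·x) ≡ x (mod n) and m·(m·y − (m−1)·x) − (m−1)·x ≡ y (mod n) hold for all distinct residues x, y modulo n, i.e., no L_n(m) is simultaneously right alternative and left alternative. -/
import Mathlib


/-- The class `Lₙ` contains no alternative loop: no `Lₙ(m)` is simultaneously
right alternative and left alternative. -/
theorem stmt_6 (n : ℕ) (hn : 3 < n) (hodd : Odd n) :
    ¬ ∃ m : ℕ, 1 < m ∧ m < n ∧ Nat.gcd m n = 1 ∧ Nat.gcd (m - 1) n = 1 ∧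
      (∀ x y : ZMod n, x ≠ y →
        (m : ZMod n) * y
            - ((m : ZMod n) - 1) * ((m : ZMod n) * y - ((m : ZMod n) - 1) * x)
          = x) ∧
      (∀ x y : ZMod n, x ≠ y →
        (m : ZMod n) * ((m : ZMod n) * y - ((m : ZMod n) - 1) * x)
            - ((m : ZMod n) - 1) * x
          = y) := by
  rintro ⟨m, hm1, hmn, hg1, hg2, hR, hL⟩
  haveI : Fact (1 < n) := ⟨by omega⟩
  have h01 : (0 : ZMod n) ≠ 1 := fun h => one_ne_zero h.symm
  have hr := hR 0 1 h01
  have hl := hL 0 1 h01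
  have hm2 : (m : ZMod n) * (m : ZMod n) = 1 := by
    have := hl
    ring_nf at this ⊢
    linear_combination this
  have h2m : 2 * (m : ZMod n) = 1 := by
    have := hr
    ring_nf at this
    linear_combination this + hm2
  have h3 : (3 : ZMod n) = 0 := by
    linear_combination (2 * (m : ZMod n) + 1) * h2m - 4 * hm2
  have : ((3 : ℕ) : ZMod n) = 0 := by exact_mod_cast h3
  have hdvd : n ∣ 3 := (ZMod.natCast_eq_zero_iff 3 n).mp this
  have := Nat.le_of_dvd (by norm_num) hdvd
  omega
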